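/- Under the PABM with rank(Θ) = K², if nodes i and j belong to different communities (c(i) ≠ c(j)), then the i-th and j-th rows of the eigenvector matrix Ξ are orthogonal: ξ_i · ξ_j = 0. -/

import Mathlib

open Matrix

/-- Under the PABM with rank `K²`, rows of the eigenvector matrix corresponding to nodes
in different communities are orthogonal. -/
theorem pabm_between_community_orthogonality (n K : ℕ) (hK : 0 < K)
    (Λ : Matrix (Fin n) (Fin K) ℝ) (c : Fin n → Fin K)
    (hΛ : ∀ i l, Λ i l ∈ Set.Icc (0 : ℝ) 1)
    (Θ : Matrix (Fin n) (Fin n) ℝ)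
    (hΘ : ∀ i j, Θ i j = Λ i (c j) * Λ j (c i))
    (hrank : Θ.rank = K ^ 2)
    (Ξ : Matrix (Fin n) (Fin (K ^ 2)) ℝ)
    (D : Matrix (Fin (K ^ 2)) (Fin (K ^ 2)) ℝ)
    (hdiag : ∀ u v, u ≠ v → D u v = 0) (hnz : ∀ u, D u u ≠ 0)
    (horth : Ξᵀ * Ξ = 1)
    (hdecomp : Θ = Ξ * D * Ξᵀ) :
    ∀ i j : Fin n, c i ≠ c j → ∑ u, Ξ i u * Ξ j u = 0 := by
  intro i j hij
  set P : Matrix (Fin n) (Fin n) ℝ := Ξ * Ξᵀ with hP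
  -- P is symmetric
  have hPsym : Pᵀ = P := by
    rw [hP, Matrix.transpose_mul, Matrix.transpose_transpose]
  -- P * Θ = Θ
  have hPΘ : P * Θ = Θ := by
    rw [hdecomp, hP]
    calc Ξ * Ξᵀ * (Ξ * D * Ξᵀ) = Ξ * (Ξᵀ * Ξ) * (D * Ξᵀ) := by
          simp only [Matrix.mul_assoc]
      _ = Ξ * D * Ξᵀ := by rw [horth, Matrix.mul_one, Matrix.mul_assoc]
  -- D is invertible diagonal; P = Θ * (Ξ * E * Ξᵀ)
  have hDdiag : D = Matrix.diagonal (fun u => D u u) := by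
    ext u v
    by_cases h : u = v
    · subst h; simp
    · simp [Matrix.diagonal_apply_ne _ h, hdiag u v h]
  set E : Matrix (Fin (K ^ 2)) (Fin (K ^ 2)) ℝ :=
    Matrix.diagonal (fun u => (D u u)⁻¹) with hE
  have hDE : D * E = 1 := by
    rw [hDdiag, hE, Matrix.diagonal_mul_diagonal]
    have : (fun u => D u u * (D u u)⁻¹) = fun _ => (1 : ℝ) := by
      funext u; exact mul_inv_cancel₀ (hnz u)
    rw [this, Matrix.diagonal_one]
  have hPfact : P = Θ * (Ξ * E * Ξᵀ) := by
    rw [hdecomp, hP]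
    calc Ξ * Ξᵀ
        = Ξ * (D * E) * Ξᵀ := by rw [hDE, Matrix.mul_one]
      _ = Ξ * D * Ξᵀ * (Ξ * E * Ξᵀ) := by
          have h1 : Ξ * D * Ξᵀ * (Ξ * E * Ξᵀ) = Ξ * D * ((Ξᵀ * Ξ) * (E * Ξᵀ)) := by
            simp only [Matrix.mul_assoc]
          rw [h1, horth, Matrix.one_mul, ← Matrix.mul_assoc, ← Matrix.mul_assoc]
  -- the span of the block vectors
  set v : Fin K × Fin K → (Fin n → ℝ) :=
    fun p i' => if c i' = p.1 then Λ i' p.2 else 0 with hv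
  set V : Submodule ℝ (Fin n → ℝ) := Submodule.span ℝ (Set.range v) with hV
  set colΘ : Submodule ℝ (Fin n → ℝ) := LinearMap.range Θ.mulVecLin with hcol
  -- columns of Θ lie in V
  have hcol_le : colΘ ≤ V := by
    rw [hcol, Matrix.range_mulVecLin, hV]
    refine Submodule.span_le.2 ?_
    rintro _ ⟨j', rfl⟩
    have hexpr : Θᵀ j' = ∑ k : Fin K, Λ j' k • v (k, c j') := by
      funext i'
      simp only [Matrix.transpose_apply, hΘ, Finset.sum_apply, Pi.smul_apply, hv,
        smul_eq_mul, mul_ite, mul_zero]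
      rw [Finset.sum_ite_eq (Finset.univ) (c i') (fun k => Λ j' k * Λ i' (c j'))]
      simp [mul_comm]
    rw [show Θ.col j' = Θᵀ j' from rfl, hexpr]
    exact Submodule.sum_mem _ fun k _ =>
      Submodule.smul_mem _ _ (Submodule.subset_span ⟨(k, c j'), rfl⟩)
  -- dimension count: colΘ = V
  have hdimV : Module.finrank ℝ V ≤ K ^ 2 := by
    have h1 := finrank_span_le_card (R := ℝ) (Set.range v)
    have h2 : (Set.range v).toFinset.card ≤ K ^ 2 := by
      rw [Set.toFinset_range]
      calc (Finset.univ.image v).card ≤ (Finset.univ : Finset (Fin K × Fin K)).card :=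
            Finset.card_image_le
        _ = K ^ 2 := by simp [sq]
    exact le_trans h1 h2
  have hdimcol : Module.finrank ℝ colΘ = K ^ 2 := by
    rw [hcol]; exact hrank
  have hVeq : colΘ = V := by
    apply Submodule.eq_of_le_of_finrank_le hcol_le
    rw [hdimcol]; exact hdimV
  -- P fixes colΘ
  have hfix : ∀ x ∈ colΘ, P *ᵥ x = x := by
    rintro _ ⟨y, rfl⟩
    show P *ᵥ (Θ *ᵥ y) = Θ *ᵥ y
    rw [Matrix.mulVec_mulVec, hPΘ]
  -- the vector P e_j and its mask
  set e : Fin n → ℝ := Pi.single j 1 with he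
  have hPe_mem : P *ᵥ e ∈ colΘ := by
    rw [hPfact, ← Matrix.mulVec_mulVec]
    exact ⟨(Ξ * E * Ξᵀ) *ᵥ e, rfl⟩
  set w : Fin n → ℝ := fun i' => if c i' = c j then 0 else (P *ᵥ e) i' with hw
  -- masking preserves V
  have hmask : ∀ x ∈ V, (fun i' => if c i' = c j then 0 else x i') ∈ V := by
    intro x hx
    refine Submodule.span_induction ?_ ?_ ?_ ?_ hx
    · rintro _ ⟨p, rfl⟩
      by_cases hp : p.1 = c j
      · have : (fun i' => if c i' = c j then 0 else v p i') = 0 := by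
          funext i'
          by_cases h : c i' = c j
          · simp [h]
          · simp [hv, hp, h]
        rw [this]; exact Submodule.zero_mem _
      · have : (fun i' => if c i' = c j then 0 else v p i') = v p := by
          funext i'
          by_cases h : c i' = c j
          · have hne : ¬ c j = p.1 := fun hh => hp hh.symm
            simp [hv, h, hne]
          · simp [h]
        rw [this]; exact Submodule.subset_span ⟨p, rfl⟩
    · have : (fun i' => if c i' = c j then (0:ℝ) else (0:Fin n → ℝ) i') = 0 := by
        funext i'; simp
      rw [this]; exact Submodule.zero_mem _
    · intro x y _ _ hx' hy'
      have : (fun i' => if c i' = c j then 0 else (x + y) i')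
          = (fun i' => if c i' = c j then 0 else x i')
            + (fun i' => if c i' = c j then 0 else y i') := by
        funext i'
        by_cases h : c i' = c j <;> simp [h]
      rw [this]; exact Submodule.add_mem _ hx' hy'
    · intro a x _ hx'
      have : (fun i' => if c i' = c j then 0 else (a • x) i')
          = a • (fun i' => if c i' = c j then 0 else x i') := by
        funext i'
        by_cases h : c i' = c j <;> simp [h]
      rw [this]; exact Submodule.smul_mem _ _ hx'
  have hw_mem : w ∈ colΘ := by
    rw [hVeq]
    exact hmask _ (hVeq ▸ hPe_mem)
  have hPw : P *ᵥ w = w := hfix _ hw_mem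
  -- sum of squares of w is zero
  have hsq : ∑ i', w i' * w i' = 0 := by
    have h1 : ∑ i', w i' * w i' = w ⬝ᵥ (P *ᵥ e) := by
      unfold dotProduct
      refine Finset.sum_congr rfl fun i' _ => ?_
      by_cases h : c i' = c j
      · simp [hw, h]
      · simp [hw, h]
    have h2 : w ⬝ᵥ (P *ᵥ e) = (P *ᵥ w) ⬝ᵥ e := by
      rw [Matrix.dotProduct_mulVec, ← Matrix.mulVec_transpose, hPsym]
    have h3 : (P *ᵥ w) ⬝ᵥ e = 0 := by
      rw [hPw, he, dotProduct_single, mul_one, hw]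
      simp
    rw [h1, h2, h3]
  -- conclude
  have hwz : w i = 0 := by
    have hnn : ∀ i' ∈ Finset.univ, (0:ℝ) ≤ w i' * w i' := fun i' _ => mul_self_nonneg _
    have := (Finset.sum_eq_zero_iff_of_nonneg hnn).1 hsq i (Finset.mem_univ i)
    exact mul_self_eq_zero.1 this
  have hwi : w i = (P *ᵥ e) i := by
    rw [hw]; simp [hij]
  have hPe : (P *ᵥ e) i = ∑ u, Ξ i u * Ξ j u := by
    rw [he, Matrix.mulVec_single]
    simp [hP, Matrix.mul_apply]
  rw [← hPe, ← hwi, hwz]
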